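/- In the 2-class premium game, assume ℓ·f_L(ℓ) ≤ 1/((1−δ)(κ−1)) for all ℓ ∈ I_L, and let (θ₁*, θ₂*) ∈ Θ² be an equilibrium premium pair (i.e. θ₁* maximizes J¹(·; θ₂*) over Θ and θ₂* maximizes J²(·; θ₁*) over Θ). Then: if k₂ ≥ 1/2 then θ₁* ≥ θ₂*; if k₂ ≤ 1/2 then θ₁* ≤ θ₂*; and if k₂ = 1/2 then θ₁* = θ₂*. -/

import Mathlib

noncomputable section

open MeasureTheory Set

/-- Cumulative distribution function of the loss: point mass `p₀` at zero plus density `fL`. -/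
def lossCdf (p₀ : ℝ) (fL : ℝ → ℝ) (x : ℝ) : ℝ := p₀ + ∫ ℓ in (0:ℝ)..x, fL ℓ

/-- The exponential choice function `η`. -/
def expEta (k₁ k₂ t : ℝ) : ℝ :=
  if 0 ≤ t then 1 - (1 - k₂) * Real.exp (-(k₁ * t)) else k₂ * Real.exp (k₁ * t)

/-- Insureds' optimal reporting barrier `b*(θ₁,θ₂) = δ(κ−1)(η̄θ₁ + (1−η̄)θ₂)`. -/
def repBarrier (δ κ k₁ k₂ θ₁ θ₂ : ℝ) : ℝ :=
  δ * (κ - 1) * (expEta k₁ k₂ (θ₂ - θ₁) * θ₁ + (1 - expEta k₁ k₂ (θ₂ - θ₁)) * θ₂)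

/-- `a = F_L(b*(θ₁,θ₂))`: probability that the loss is hidden. -/
def aProb (p₀ : ℝ) (fL : ℝ → ℝ) (δ κ k₁ k₂ θ₁ θ₂ : ℝ) : ℝ :=
  lossCdf p₀ fL (repBarrier δ κ k₁ k₂ θ₁ θ₂)

/-- `m = ∫_{b*(θ₁,θ₂)}^∞ ℓ f_L(ℓ) dℓ`: expected reported loss. -/
def mRep (fL : ℝ → ℝ) (δ κ k₁ k₂ θ₁ θ₂ : ℝ) : ℝ :=
  ∫ ℓ in Set.Ioi (repBarrier δ κ k₁ k₂ θ₁ θ₂), ℓ * fL ℓ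

/-- Company 1's expected per-period profit `J¹(θ₁;θ₂)`. -/
def J1 (p₀ : ℝ) (fL : ℝ → ℝ) (δ κ k₁ k₂ θ₁ θ₂ : ℝ) : ℝ :=
  expEta k₁ k₂ (θ₂ - θ₁) *
    (θ₁ * (aProb p₀ fL δ κ k₁ k₂ θ₁ θ₂ + κ * (1 - aProb p₀ fL δ κ k₁ k₂ θ₁ θ₂))
      - mRep fL δ κ k₁ k₂ θ₁ θ₂)

/-- Company 2's expected per-period profit `J²(θ₂;θ₁)`. -/
def J2 (p₀ : ℝ) (fL : ℝ → ℝ) (δ κ k₁ k₂ θ₂ θ₁ : ℝ) : ℝ :=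
  (1 - expEta k₁ k₂ (θ₂ - θ₁)) *
    (θ₂ * (aProb p₀ fL δ κ k₁ k₂ θ₁ θ₂ + κ * (1 - aProb p₀ fL δ κ k₁ k₂ θ₁ θ₂))
      - mRep fL δ κ k₁ k₂ θ₁ θ₂)

/-- `A₁ = k₂(2−δk₂)/(2−k₂)`. -/
def A1 (δ k₂ : ℝ) : ℝ := k₂ * (2 - δ * k₂) / (2 - k₂)

/-- `A₂ = (1−k₂)(2−δ(1−k₂))/(1+k₂)`. -/
def A2 (δ k₂ : ℝ) : ℝ := (1 - k₂) * (2 - δ * (1 - k₂)) / (1 + k₂)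

/-- `m₁ = k₁/(δ(κ−1)²k₂·max(2A₁, 2δ−A₁))`. -/
def m1 (δ κ k₁ k₂ : ℝ) : ℝ :=
  k₁ / (δ * (κ - 1) ^ 2 * k₂ * max (2 * A1 δ k₂) (2 * δ - A1 δ k₂))

/-- `m₂ = k₁/(δ(κ−1)²(1−k₂)·max(2A₂, 2δ−A₂))`. -/
def m2 (δ κ k₁ k₂ : ℝ) : ℝ :=
  k₁ / (δ * (κ - 1) ^ 2 * (1 - k₂) * max (2 * A2 δ k₂) (2 * δ - A2 δ k₂))

/-- The premium strategy set `Θ = [μ, M/κ]`. -/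
def Theta (μ M κ : ℝ) : Set ℝ := Set.Icc μ (M / κ)

/-- The interval `I_L = [δ(κ−1)μ, δ(κ−1)M/κ]` of possible barriers. -/
def IL (δ κ μ M : ℝ) : Set ℝ := Set.Icc (δ * (κ - 1) * μ) (δ * (κ - 1) * (M / κ))


/-! ### auxiliary lemmas -/

lemma expEta_swap (k₁ k₂ t : ℝ) : expEta k₁ (1 - k₂) (-t) = 1 - expEta k₁ k₂ t := by
  unfold expEta
  rcases lt_trichotomy t 0 with h | h | h
  · rw [if_pos (by linarith), if_neg (not_le.2 h)]
    have h1 : -(k₁ * -t) = k₁ * t := by ring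
    rw [h1]; ring
  · subst h; norm_num
  · rw [if_neg (by push_neg; linarith), if_pos h.le]
    have h1 : k₁ * -t = -(k₁ * t) := by ring
    rw [h1]; ring

lemma repBarrier_swap (δ κ k₁ k₂ θ₁ θ₂ : ℝ) :
    repBarrier δ κ k₁ (1 - k₂) θ₂ θ₁ = repBarrier δ κ k₁ k₂ θ₁ θ₂ := by
  unfold repBarrier
  rw [show θ₁ - θ₂ = -(θ₂ - θ₁) by ring, expEta_swap]
  ring

lemma J2_eq_J1_swap (p₀ δ κ k₁ k₂ : ℝ) (fL : ℝ → ℝ) (θ θ' : ℝ) :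
    J2 p₀ fL δ κ k₁ k₂ θ θ' = J1 p₀ fL δ κ k₁ (1 - k₂) θ θ' := by
  unfold J1 J2 aProb mRep
  rw [show θ' - θ = -(θ - θ') by ring, expEta_swap, repBarrier_swap]

lemma J1_eq_J2_swap (p₀ δ κ k₁ k₂ : ℝ) (fL : ℝ → ℝ) (θ θ' : ℝ) :
    J1 p₀ fL δ κ k₁ k₂ θ θ' = J2 p₀ fL δ κ k₁ (1 - k₂) θ θ' := by
  rw [J2_eq_J1_swap, show (1:ℝ) - (1 - k₂) = k₂ by ring]

lemma deriv_nonpos_of_isMaxOn {f : ℝ → ℝ} {a b x f' : ℝ}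
    (hmax : ∀ y ∈ Icc a b, f y ≤ f x) (hd : HasDerivAt f f' x)
    (hx : a ≤ x) (hxb : x < b) : f' ≤ 0 := by
  have h1 : Filter.Tendsto (slope f x) (nhdsWithin x (Ioi x)) (nhds f') :=
    (hasDerivAt_iff_tendsto_slope.1 hd).mono_left
      (nhdsWithin_mono _ (fun y hy => ne_of_gt (α := ℝ) hy))
  refine le_of_tendsto h1 ?_
  filter_upwards [Ioo_mem_nhdsGT_of_mem (left_mem_Ico.2 hxb)] with y hy
  have hfy : f y ≤ f x := hmax y ⟨(lt_of_le_of_lt hx hy.1).le.trans (le_refl y), hy.2.le⟩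
  have hyx : (0:ℝ) < y - x := sub_pos.2 hy.1
  rw [slope_def_field]
  exact div_nonpos_iff.2 (Or.inr ⟨by linarith, by linarith⟩)

lemma deriv_nonneg_of_isMaxOn {f : ℝ → ℝ} {a b x f' : ℝ}
    (hmax : ∀ y ∈ Icc a b, f y ≤ f x) (hd : HasDerivAt f f' x)
    (hx : a < x) (hxb : x ≤ b) : 0 ≤ f' := by
  have h1 : Filter.Tendsto (slope f x) (nhdsWithin x (Iio x)) (nhds f') :=
    (hasDerivAt_iff_tendsto_slope.1 hd).mono_left
      (nhdsWithin_mono _ (fun y hy => (ne_of_lt hy)))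
  refine ge_of_tendsto h1 ?_
  filter_upwards [Ioo_mem_nhdsLT_of_mem (right_mem_Ioc.2 hx)] with y hy
  have hfy : f y ≤ f x := hmax y ⟨hy.1.le, hy.2.le.trans hxb⟩
  have hyx : y - x < 0 := sub_neg.2 hy.2
  rw [slope_def_field]
  exact div_nonneg_of_nonpos (by linarith) (by linarith)

lemma lossCdf_hasDerivAt (p₀ : ℝ) (fL : ℝ → ℝ)
    (hcont : ∀ x ∈ Ioi (0:ℝ), ContinuousAt fL x)
    (hfint : IntegrableOn fL (Ioi 0)) {b : ℝ} (hb : 0 < b) :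
    HasDerivAt (lossCdf p₀ fL) (fL b) b := by
  have h1 : IntervalIntegrable fL MeasureTheory.volume 0 b := by
    rw [intervalIntegrable_iff, uIoc_of_le hb.le]
    exact hfint.mono_set Ioc_subset_Ioi_self
  have h2 : StronglyMeasurableAtFilter fL (nhds b) :=
    ContinuousAt.stronglyMeasurableAtFilter isOpen_Ioi hcont b hb
  have h3 := intervalIntegral.integral_hasDerivAt_right h1 h2 (hcont b hb)
  have h4 := h3.const_add p₀
  exact h4

lemma mtail_hasDerivAt (fL : ℝ → ℝ)
    (hcont : ∀ x ∈ Ioi (0:ℝ), ContinuousAt fL x)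
    (hmint : IntegrableOn (fun ℓ => ℓ * fL ℓ) (Ioi 0)) {b : ℝ} (hb : 0 < b) :
    HasDerivAt (fun x => ∫ ℓ in Set.Ioi x, ℓ * fL ℓ) (-(b * fL b)) b := by
  have hgcont : ∀ x ∈ Ioi (0:ℝ), ContinuousAt (fun ℓ => ℓ * fL ℓ) x :=
    fun x hx => continuousAt_id.mul (hcont x hx)
  have key : ∀ x ∈ Ioi (0:ℝ), (∫ ℓ in Set.Ioi x, ℓ * fL ℓ)
      = (∫ ℓ in Set.Ioi (0:ℝ), ℓ * fL ℓ) - ∫ ℓ in (0:ℝ)..x, ℓ * fL ℓ := by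
    intro x hx
    rw [intervalIntegral.integral_of_le (le_of_lt hx)]
    have hsplit : (∫ ℓ in Set.Ioi (0:ℝ), ℓ * fL ℓ)
        = (∫ ℓ in Set.Ioc (0:ℝ) x, ℓ * fL ℓ) + ∫ ℓ in Set.Ioi x, ℓ * fL ℓ := by
      rw [← MeasureTheory.setIntegral_union (Ioc_disjoint_Ioi le_rfl) measurableSet_Ioi
            (hmint.mono_set Ioc_subset_Ioi_self) (hmint.mono_set (Ioi_subset_Ioi (le_of_lt hx))),
          Ioc_union_Ioi_eq_Ioi (le_of_lt hx)]
    linarith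
  have h1 : IntervalIntegrable (fun ℓ => ℓ * fL ℓ) MeasureTheory.volume 0 b := by
    rw [intervalIntegrable_iff, uIoc_of_le hb.le]
    exact hmint.mono_set Ioc_subset_Ioi_self
  have h2 : StronglyMeasurableAtFilter (fun ℓ => ℓ * fL ℓ) (nhds b) :=
    ContinuousAt.stronglyMeasurableAtFilter isOpen_Ioi hgcont b hb
  have hD := (intervalIntegral.integral_hasDerivAt_right h1 h2 (hgcont b hb)).const_sub
      (∫ ℓ in Set.Ioi (0:ℝ), ℓ * fL ℓ)
  have hev : (fun x => ∫ ℓ in Set.Ioi x, ℓ * fL ℓ)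
      =ᶠ[nhds b] fun x => (∫ ℓ in Set.Ioi (0:ℝ), ℓ * fL ℓ) - ∫ ℓ in (0:ℝ)..x, ℓ * fL ℓ := by
    filter_upwards [isOpen_Ioi.mem_nhds hb] with x hx using key x hx
  exact hev.hasDerivAt_iff.2 hD

lemma expEta_hasDerivAt_left {k₁ k₂ θ₁ θ₂ : ℝ} (h : θ₁ < θ₂) :
    HasDerivAt (fun θ => expEta k₁ k₂ (θ₂ - θ))
      (-(k₁ * ((1 - k₂) * Real.exp (-(k₁ * (θ₂ - θ₁)))))) θ₁ := by
  have h1 : HasDerivAt (fun θ : ℝ => -(k₁ * (θ₂ - θ))) k₁ θ₁ := by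
    have h0 : (fun θ : ℝ => -(k₁ * (θ₂ - θ))) = fun θ => k₁ * θ - k₁ * θ₂ := by
      funext θ; ring
    rw [h0]
    simpa using (hasDerivAt_id θ₁).const_mul k₁ |>.sub_const (k₁ * θ₂)
  have h3 := ((h1.exp.const_mul (1 - k₂)).const_sub 1)
  have hev : (fun θ => expEta k₁ k₂ (θ₂ - θ))
      =ᶠ[nhds θ₁] fun θ => 1 - (1 - k₂) * Real.exp (-(k₁ * (θ₂ - θ))) := by
    filter_upwards [Iio_mem_nhds h] with θ hθ
    rw [expEta, if_pos (by simp only [mem_Iio] at hθ; linarith : (0:ℝ) ≤ θ₂ - θ)]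
  refine hev.hasDerivAt_iff.2 ?_
  convert h3 using 1
  ring

lemma expEta_hasDerivAt_right {k₁ k₂ θ₁ θ₂ : ℝ} (h : θ₁ < θ₂) :
    HasDerivAt (fun θ => expEta k₁ k₂ (θ - θ₁))
      (k₁ * ((1 - k₂) * Real.exp (-(k₁ * (θ₂ - θ₁))))) θ₂ := by
  have h1 : HasDerivAt (fun θ : ℝ => -(k₁ * (θ - θ₁))) (-k₁) θ₂ := by
    have h0 : (fun θ : ℝ => -(k₁ * (θ - θ₁))) = fun θ => k₁ * θ₁ - k₁ * θ := by
      funext θ; ring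
    rw [h0]
    simpa using ((hasDerivAt_id θ₂).const_mul k₁).const_sub (k₁ * θ₁)
  have h3 := ((h1.exp.const_mul (1 - k₂)).const_sub 1)
  have hev : (fun θ => expEta k₁ k₂ (θ - θ₁))
      =ᶠ[nhds θ₂] fun θ => 1 - (1 - k₂) * Real.exp (-(k₁ * (θ - θ₁))) := by
    filter_upwards [Ioi_mem_nhds h] with θ hθ
    rw [expEta, if_pos (by simp only [mem_Ioi] at hθ; linarith : (0:ℝ) ≤ θ - θ₁)]
  refine hev.hasDerivAt_iff.2 ?_
  convert h3 using 1
  ring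

lemma J1_hasDerivAt (p₀ δ κ k₁ k₂ θ₁ θ₂ : ℝ) (fL : ℝ → ℝ)
    (hcont : ∀ x ∈ Ioi (0:ℝ), ContinuousAt fL x)
    (hfint : IntegrableOn fL (Ioi 0))
    (hmint : IntegrableOn (fun ℓ => ℓ * fL ℓ) (Ioi 0))
    (hlt : θ₁ < θ₂) (hbpos : 0 < repBarrier δ κ k₁ k₂ θ₁ θ₂) :
    HasDerivAt (fun θ => J1 p₀ fL δ κ k₁ k₂ θ θ₂)
      (-(k₁ * ((1 - k₂) * Real.exp (-(k₁ * (θ₂ - θ₁))))) *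
          (θ₁ * (aProb p₀ fL δ κ k₁ k₂ θ₁ θ₂ + κ * (1 - aProb p₀ fL δ κ k₁ k₂ θ₁ θ₂))
            - mRep fL δ κ k₁ k₂ θ₁ θ₂)
        + (1 - (1 - k₂) * Real.exp (-(k₁ * (θ₂ - θ₁)))) *
          ((aProb p₀ fL δ κ k₁ k₂ θ₁ θ₂ + κ * (1 - aProb p₀ fL δ κ k₁ k₂ θ₁ θ₂))
            + (repBarrier δ κ k₁ k₂ θ₁ θ₂ - (κ - 1) * θ₁) *
              (fL (repBarrier δ κ k₁ k₂ θ₁ θ₂) *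
                (δ * (κ - 1) * ((1 - (1 - k₂) * Real.exp (-(k₁ * (θ₂ - θ₁))))
                  + k₁ * ((1 - k₂) * Real.exp (-(k₁ * (θ₂ - θ₁)))) * (θ₂ - θ₁))))))
      θ₁ := by
  have hEv : expEta k₁ k₂ (θ₂ - θ₁) = 1 - (1 - k₂) * Real.exp (-(k₁ * (θ₂ - θ₁))) := by
    rw [expEta, if_pos (by linarith : (0:ℝ) ≤ θ₂ - θ₁)]
  have hE := expEta_hasDerivAt_left (k₁ := k₁) (k₂ := k₂) hlt
  -- derivative of the barrier
  have hB : HasDerivAt (fun θ => repBarrier δ κ k₁ k₂ θ θ₂)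
      (δ * (κ - 1) * ((1 - (1 - k₂) * Real.exp (-(k₁ * (θ₂ - θ₁))))
        + k₁ * ((1 - k₂) * Real.exp (-(k₁ * (θ₂ - θ₁)))) * (θ₂ - θ₁))) θ₁ := by
    have h1 := ((hE.mul (hasDerivAt_id θ₁)).add ((hE.const_sub 1).mul_const θ₂)).const_mul
      (δ * (κ - 1))
    have h2 : (fun θ => repBarrier δ κ k₁ k₂ θ θ₂)
        = fun θ => δ * (κ - 1) * (expEta k₁ k₂ (θ₂ - θ) * id θ
            + (1 - expEta k₁ k₂ (θ₂ - θ)) * θ₂) := rfl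
    rw [h2]
    refine h1.congr_deriv ?_
    rw [hEv]; simp only [id_eq]; ring
  have hF := (lossCdf_hasDerivAt p₀ fL hcont hfint hbpos).comp θ₁ hB
  have hM := (mtail_hasDerivAt fL hcont hmint hbpos).comp θ₁ hB
  have hFB : HasDerivAt (fun θ => lossCdf p₀ fL (repBarrier δ κ k₁ k₂ θ θ₂))
      (fL (repBarrier δ κ k₁ k₂ θ₁ θ₂) *
        (δ * (κ - 1) * ((1 - (1 - k₂) * Real.exp (-(k₁ * (θ₂ - θ₁))))
          + k₁ * ((1 - k₂) * Real.exp (-(k₁ * (θ₂ - θ₁)))) * (θ₂ - θ₁)))) θ₁ := hF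
  have hMB : HasDerivAt (fun θ => ∫ ℓ in Set.Ioi (repBarrier δ κ k₁ k₂ θ θ₂), ℓ * fL ℓ)
      (-(repBarrier δ κ k₁ k₂ θ₁ θ₂ * fL (repBarrier δ κ k₁ k₂ θ₁ θ₂)) *
        (δ * (κ - 1) * ((1 - (1 - k₂) * Real.exp (-(k₁ * (θ₂ - θ₁))))
          + k₁ * ((1 - k₂) * Real.exp (-(k₁ * (θ₂ - θ₁)))) * (θ₂ - θ₁)))) θ₁ := hM
  have hInner := ((hasDerivAt_id θ₁).mul (hFB.add ((hFB.const_sub 1).const_mul κ))).sub hMB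
  have hJ := hE.mul hInner
  have h5 : (fun θ => J1 p₀ fL δ κ k₁ k₂ θ θ₂)
      = fun θ => expEta k₁ k₂ (θ₂ - θ) *
          (id θ * (lossCdf p₀ fL (repBarrier δ κ k₁ k₂ θ θ₂)
              + κ * (1 - lossCdf p₀ fL (repBarrier δ κ k₁ k₂ θ θ₂)))
            - ∫ ℓ in Set.Ioi (repBarrier δ κ k₁ k₂ θ θ₂), ℓ * fL ℓ) := rfl
  rw [h5]
  refine hJ.congr_deriv ?_
  rw [show aProb p₀ fL δ κ k₁ k₂ θ₁ θ₂ = lossCdf p₀ fL (repBarrier δ κ k₁ k₂ θ₁ θ₂) from rfl,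
    show mRep fL δ κ k₁ k₂ θ₁ θ₂ = ∫ ℓ in Set.Ioi (repBarrier δ κ k₁ k₂ θ₁ θ₂), ℓ * fL ℓ from rfl,
    hEv]
  simp only [id_eq, Pi.mul_apply, Pi.add_apply, Pi.sub_apply]
  ring

lemma J2_hasDerivAt (p₀ δ κ k₁ k₂ θ₁ θ₂ : ℝ) (fL : ℝ → ℝ)
    (hcont : ∀ x ∈ Ioi (0:ℝ), ContinuousAt fL x)
    (hfint : IntegrableOn fL (Ioi 0))
    (hmint : IntegrableOn (fun ℓ => ℓ * fL ℓ) (Ioi 0))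
    (hlt : θ₁ < θ₂) (hbpos : 0 < repBarrier δ κ k₁ k₂ θ₁ θ₂) :
    HasDerivAt (fun θ => J2 p₀ fL δ κ k₁ k₂ θ θ₁)
      (-(k₁ * ((1 - k₂) * Real.exp (-(k₁ * (θ₂ - θ₁))))) *
          (θ₂ * (aProb p₀ fL δ κ k₁ k₂ θ₁ θ₂ + κ * (1 - aProb p₀ fL δ κ k₁ k₂ θ₁ θ₂))
            - mRep fL δ κ k₁ k₂ θ₁ θ₂)
        + ((1 - k₂) * Real.exp (-(k₁ * (θ₂ - θ₁)))) *
          ((aProb p₀ fL δ κ k₁ k₂ θ₁ θ₂ + κ * (1 - aProb p₀ fL δ κ k₁ k₂ θ₁ θ₂))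
            + (repBarrier δ κ k₁ k₂ θ₁ θ₂ - (κ - 1) * θ₂) *
              (fL (repBarrier δ κ k₁ k₂ θ₁ θ₂) *
                (δ * (κ - 1) * ((1 - k₂) * Real.exp (-(k₁ * (θ₂ - θ₁)))
                  - k₁ * ((1 - k₂) * Real.exp (-(k₁ * (θ₂ - θ₁)))) * (θ₂ - θ₁))))))
      θ₂ := by
  have hEv : expEta k₁ k₂ (θ₂ - θ₁) = 1 - (1 - k₂) * Real.exp (-(k₁ * (θ₂ - θ₁))) := by
    rw [expEta, if_pos (by linarith : (0:ℝ) ≤ θ₂ - θ₁)]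
  have hE := expEta_hasDerivAt_right (k₁ := k₁) (k₂ := k₂) hlt
  have hB : HasDerivAt (fun θ => repBarrier δ κ k₁ k₂ θ₁ θ)
      (δ * (κ - 1) * ((1 - k₂) * Real.exp (-(k₁ * (θ₂ - θ₁)))
        - k₁ * ((1 - k₂) * Real.exp (-(k₁ * (θ₂ - θ₁)))) * (θ₂ - θ₁))) θ₂ := by
    have h1 := ((hE.mul_const θ₁).add ((hE.const_sub 1).mul (hasDerivAt_id θ₂))).const_mul
      (δ * (κ - 1))
    have h2 : (fun θ => repBarrier δ κ k₁ k₂ θ₁ θ)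
        = fun θ => δ * (κ - 1) * (expEta k₁ k₂ (θ - θ₁) * θ₁
            + (1 - expEta k₁ k₂ (θ - θ₁)) * id θ) := rfl
    rw [h2]
    refine h1.congr_deriv ?_
    rw [hEv]; simp only [id_eq]; ring
  have hF := (lossCdf_hasDerivAt p₀ fL hcont hfint hbpos).comp θ₂ hB
  have hM := (mtail_hasDerivAt fL hcont hmint hbpos).comp θ₂ hB
  have hFB : HasDerivAt (fun θ => lossCdf p₀ fL (repBarrier δ κ k₁ k₂ θ₁ θ))
      (fL (repBarrier δ κ k₁ k₂ θ₁ θ₂) *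
        (δ * (κ - 1) * ((1 - k₂) * Real.exp (-(k₁ * (θ₂ - θ₁)))
          - k₁ * ((1 - k₂) * Real.exp (-(k₁ * (θ₂ - θ₁)))) * (θ₂ - θ₁)))) θ₂ := hF
  have hMB : HasDerivAt (fun θ => ∫ ℓ in Set.Ioi (repBarrier δ κ k₁ k₂ θ₁ θ), ℓ * fL ℓ)
      (-(repBarrier δ κ k₁ k₂ θ₁ θ₂ * fL (repBarrier δ κ k₁ k₂ θ₁ θ₂)) *
        (δ * (κ - 1) * ((1 - k₂) * Real.exp (-(k₁ * (θ₂ - θ₁)))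
          - k₁ * ((1 - k₂) * Real.exp (-(k₁ * (θ₂ - θ₁)))) * (θ₂ - θ₁)))) θ₂ := hM
  have hInner := ((hasDerivAt_id θ₂).mul (hFB.add ((hFB.const_sub 1).const_mul κ))).sub hMB
  have hJ := (hE.const_sub 1).mul hInner
  have h5 : (fun θ => J2 p₀ fL δ κ k₁ k₂ θ θ₁)
      = fun θ => (1 - expEta k₁ k₂ (θ - θ₁)) *
          (id θ * (lossCdf p₀ fL (repBarrier δ κ k₁ k₂ θ₁ θ)
              + κ * (1 - lossCdf p₀ fL (repBarrier δ κ k₁ k₂ θ₁ θ)))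
            - ∫ ℓ in Set.Ioi (repBarrier δ κ k₁ k₂ θ₁ θ), ℓ * fL ℓ) := rfl
  rw [h5]
  refine hJ.congr_deriv ?_
  rw [show aProb p₀ fL δ κ k₁ k₂ θ₁ θ₂ = lossCdf p₀ fL (repBarrier δ κ k₁ k₂ θ₁ θ₂) from rfl,
    show mRep fL δ κ k₁ k₂ θ₁ θ₂ = ∫ ℓ in Set.Ioi (repBarrier δ κ k₁ k₂ θ₁ θ₂), ℓ * fL ℓ from rfl,
    hEv]
  simp only [id_eq, Pi.mul_apply, Pi.add_apply, Pi.sub_apply]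
  ring

set_option maxHeartbeats 2000000 in
lemma key_lemma (p₀ δ κ M k₁ k₂ μ : ℝ) (fL : ℝ → ℝ) (θs₁ θs₂ : ℝ)
    (hδ : δ ∈ Set.Ioo (0:ℝ) 1) (hκ : κ ∈ Set.Ioo (1:ℝ) 2)
    (hk₁ : k₁ ∈ Set.Ioo (0:ℝ) 1) (hk₂ : k₂ ∈ Set.Ioo (0:ℝ) 1)
    (hfpos : ∀ ℓ : ℝ, 0 < ℓ → 0 < fL ℓ)
    (hcont : ∀ x ∈ Ioi (0:ℝ), ContinuousAt fL x)
    (hfint : IntegrableOn fL (Set.Ioi 0))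
    (hftot : ∫ ℓ in Set.Ioi (0:ℝ), fL ℓ = 1 - p₀)
    (hmint : IntegrableOn (fun ℓ => ℓ * fL ℓ) (Set.Ioi 0))
    (hμpos : 0 < μ)
    (hcond : ∀ ℓ ∈ IL δ κ μ M, ℓ * fL ℓ ≤ 1 / ((1 - δ) * (κ - 1)))
    (hθs₁ : θs₁ ∈ Theta μ M κ) (hθs₂ : θs₂ ∈ Theta μ M κ)
    (heq₁ : ∀ θ ∈ Theta μ M κ, J1 p₀ fL δ κ k₁ k₂ θ θs₂ ≤ J1 p₀ fL δ κ k₁ k₂ θs₁ θs₂)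
    (heq₂ : ∀ θ ∈ Theta μ M κ, J2 p₀ fL δ κ k₁ k₂ θ θs₁ ≤ J2 p₀ fL δ κ k₁ k₂ θs₂ θs₁)
    (hk : 1 / 2 ≤ k₂) : θs₂ ≤ θs₁ := by
  by_contra hcon
  push_neg at hcon
  obtain ⟨hδ0, hδ1⟩ := hδ
  obtain ⟨hκ1, hκ2⟩ := hκ
  obtain ⟨hk₁0, hk₁1⟩ := hk₁
  obtain ⟨hk₂0, hk₂1⟩ := hk₂
  obtain ⟨hθ₁l, hθ₁u⟩ := hθs₁
  obtain ⟨hθ₂l, hθ₂u⟩ := hθs₂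
  have ht : 0 < θs₂ - θs₁ := sub_pos.2 hcon
  have hexppos : 0 < Real.exp (-(k₁ * (θs₂ - θs₁))) := Real.exp_pos _
  have hexp1 : Real.exp (-(k₁ * (θs₂ - θs₁))) < 1 := by
    rw [Real.exp_lt_one_iff]
    nlinarith
  -- the weight `e`
  have he0 : 0 < (1 - k₂) * Real.exp (-(k₁ * (θs₂ - θs₁))) := by nlinarith
  have heh : (1 - k₂) * Real.exp (-(k₁ * (θs₂ - θs₁))) < 1 / 2 := by nlinarith
  have hEv : expEta k₁ k₂ (θs₂ - θs₁)
      = 1 - (1 - k₂) * Real.exp (-(k₁ * (θs₂ - θs₁))) := by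
    rw [expEta, if_pos (by linarith : (0:ℝ) ≤ θs₂ - θs₁)]
  have hBeq : repBarrier δ κ k₁ k₂ θs₁ θs₂
      = δ * (κ - 1) * ((1 - (1 - k₂) * Real.exp (-(k₁ * (θs₂ - θs₁)))) * θs₁
          + ((1 - k₂) * Real.exp (-(k₁ * (θs₂ - θs₁)))) * θs₂) := by
    rw [repBarrier, hEv]; ring
  have hbarlb : μ ≤ (1 - (1 - k₂) * Real.exp (-(k₁ * (θs₂ - θs₁)))) * θs₁
      + ((1 - k₂) * Real.exp (-(k₁ * (θs₂ - θs₁)))) * θs₂ := by nlinarith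
  have hbarub : (1 - (1 - k₂) * Real.exp (-(k₁ * (θs₂ - θs₁)))) * θs₁
      + ((1 - k₂) * Real.exp (-(k₁ * (θs₂ - θs₁)))) * θs₂ ≤ M / κ := by nlinarith
  have hBpos : 0 < repBarrier δ κ k₁ k₂ θs₁ θs₂ := by
    rw [hBeq]
    have h1 : 0 < δ * (κ - 1) := mul_pos hδ0 (by linarith)
    nlinarith
  -- basic facts about the density at the barrier
  have hq_pos : 0 < fL (repBarrier δ κ k₁ k₂ θs₁ θs₂) := hfpos _ hBpos
  have ha_le : aProb p₀ fL δ κ k₁ k₂ θs₁ θs₂ ≤ 1 := by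
    have hintle : ∫ ℓ in (0:ℝ)..(repBarrier δ κ k₁ k₂ θs₁ θs₂), fL ℓ ≤ 1 - p₀ := by
      rw [intervalIntegral.integral_of_le hBpos.le, ← hftot]
      refine setIntegral_mono_set hfint ?_ ?_
      · exact (ae_restrict_iff' measurableSet_Ioi).2
          (Filter.Eventually.of_forall fun x hx => (hfpos x hx).le)
      · exact HasSubset.Subset.eventuallyLE Ioc_subset_Ioi_self
    rw [aProb, lossCdf]
    linarith
  have hc_ge : 1 ≤ aProb p₀ fL δ κ k₁ k₂ θs₁ θs₂
      + κ * (1 - aProb p₀ fL δ κ k₁ k₂ θs₁ θs₂) := by nlinarith [ha_le, hκ1]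
  -- the premium cap condition
  have hBmem : repBarrier δ κ k₁ k₂ θs₁ θs₂ ∈ IL δ κ μ M := by
    constructor
    · rw [hBeq]
      have h1 : 0 ≤ δ * (κ - 1) := le_of_lt (mul_pos hδ0 (by linarith))
      nlinarith
    · rw [hBeq]
      have h1 : 0 ≤ δ * (κ - 1) := le_of_lt (mul_pos hδ0 (by linarith))
      nlinarith
  have hbq := hcond _ hBmem
  have hpos2 : 0 < (1 - δ) * (κ - 1) := mul_pos (by linarith) (by linarith)
  have hcap : repBarrier δ κ k₁ k₂ θs₁ θs₂ * fL (repBarrier δ κ k₁ k₂ θs₁ θs₂)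
      * ((1 - δ) * (κ - 1)) ≤ 1 := by
    have h3 := (le_div_iff₀ hpos2).1 hbq
    linarith
  -- derivative signs
  have hD1 := J1_hasDerivAt p₀ δ κ k₁ k₂ θs₁ θs₂ fL hcont hfint hmint hcon hBpos
  have hD2 := J2_hasDerivAt p₀ δ κ k₁ k₂ θs₁ θs₂ fL hcont hfint hmint hcon hBpos
  have hd1 := deriv_nonpos_of_isMaxOn (f := fun θ => J1 p₀ fL δ κ k₁ k₂ θ θs₂)
    (a := μ) (b := M / κ) heq₁ hD1 hθ₁l (lt_of_lt_of_le hcon hθ₂u)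
  have hd2 := deriv_nonneg_of_isMaxOn (f := fun θ => J2 p₀ fL δ κ k₁ k₂ θ θs₁)
    (a := μ) (b := M / κ) heq₂ hD2 (lt_of_le_of_lt hθ₁l hcon) hθ₂u
  clear hD1 hD2 heq₁ heq₂ hcond
  -- final contradiction
  set E := (1 - k₂) * Real.exp (-(k₁ * (θs₂ - θs₁))) with hE_def
  set A := aProb p₀ fL δ κ k₁ k₂ θs₁ θs₂ with hA_def
  set Mv := mRep fL δ κ k₁ k₂ θs₁ θs₂ with hMv_def
  set q := fL (repBarrier δ κ k₁ k₂ θs₁ θs₂) with hq_def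
  set B := repBarrier δ κ k₁ k₂ θs₁ θs₂ with hB_def
  have hAA : 0 < 1 - 2 * E + k₁ * (θs₂ - θs₁) * E := by
    have h9 : 0 ≤ k₁ * (θs₂ - θs₁) * E := by positivity
    linarith [heh]
  have hid : (-(k₁ * E) * (θs₂ * (A + κ * (1 - A)) - Mv)
        + E * ((A + κ * (1 - A)) + (B - (κ - 1) * θs₂)
            * (q * (δ * (κ - 1) * (E - k₁ * E * (θs₂ - θs₁))))))
      - (-(k₁ * E) * (θs₁ * (A + κ * (1 - A)) - Mv)
        + (1 - E) * ((A + κ * (1 - A)) + (B - (κ - 1) * θs₁)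
            * (q * (δ * (κ - 1) * ((1 - E) + k₁ * E * (θs₂ - θs₁))))))
      = (1 - 2 * E + k₁ * (θs₂ - θs₁) * E)
          * (B * q * ((1 - δ) * (κ - 1)) - (A + κ * (1 - A)))
        - q * δ * (κ - 1) ^ 2 * E * (1 - E) * (θs₂ - θs₁) := by
    rw [hBeq]; ring
  have hterm : 0 < q * δ * (κ - 1) ^ 2 * E * (1 - E) * (θs₂ - θs₁) :=
    mul_pos (mul_pos (mul_pos (mul_pos (mul_pos hq_pos hδ0)
      (pow_pos (by linarith : (0:ℝ) < κ - 1) 2)) he0) (by linarith)) ht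
  have hfac : (1 - 2 * E + k₁ * (θs₂ - θs₁) * E)
      * (B * q * ((1 - δ) * (κ - 1)) - (A + κ * (1 - A))) ≤ 0 :=
    mul_nonpos_iff.2 (Or.inl ⟨hAA.le, by linarith⟩)
  linarith


/-- Proposition 4.1: the ordering of equilibrium premiums is determined
by the insureds' intrinsic preference `k₂`. -/
theorem stmt_12 (p₀ δ κ M k₁ k₂ μ : ℝ) (fL fL' : ℝ → ℝ) (θs₁ θs₂ : ℝ)
    (hp₀ : p₀ ∈ Set.Ioo (0:ℝ) 1) (hδ : δ ∈ Set.Ioo (0:ℝ) 1)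
    (hκ : κ ∈ Set.Ioo (1:ℝ) 2)
    (hk₁ : k₁ ∈ Set.Ioo (0:ℝ) 1) (hk₂ : k₂ ∈ Set.Ioo (0:ℝ) 1)
    (hfpos : ∀ ℓ : ℝ, 0 < ℓ → 0 < fL ℓ)
    (hfd : ∀ ℓ : ℝ, 0 < ℓ → HasDerivAt fL (fL' ℓ) ℓ)
    (hfd_cont : ContinuousOn fL' (Set.Ioi 0))
    (hfint : IntegrableOn fL (Set.Ioi 0))
    (hftot : ∫ ℓ in Set.Ioi (0:ℝ), fL ℓ = 1 - p₀)
    (hmint : IntegrableOn (fun ℓ => ℓ * fL ℓ) (Set.Ioi 0))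
    (hμ : μ = ∫ ℓ in Set.Ioi (0:ℝ), ℓ * fL ℓ) (hμpos : 0 < μ) (hM : κ * μ ≤ M)
    (hcond : ∀ ℓ ∈ IL δ κ μ M, ℓ * fL ℓ ≤ 1 / ((1 - δ) * (κ - 1)))
    (hθs₁ : θs₁ ∈ Theta μ M κ) (hθs₂ : θs₂ ∈ Theta μ M κ)
    (heq₁ : ∀ θ ∈ Theta μ M κ, J1 p₀ fL δ κ k₁ k₂ θ θs₂ ≤ J1 p₀ fL δ κ k₁ k₂ θs₁ θs₂)
    (heq₂ : ∀ θ ∈ Theta μ M κ, J2 p₀ fL δ κ k₁ k₂ θ θs₁ ≤ J2 p₀ fL δ κ k₁ k₂ θs₂ θs₁) :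
    (1 / 2 ≤ k₂ → θs₂ ≤ θs₁) ∧ (k₂ ≤ 1 / 2 → θs₁ ≤ θs₂) ∧
    (k₂ = 1 / 2 → θs₁ = θs₂) := by
  have hcont : ∀ x ∈ Ioi (0:ℝ), ContinuousAt fL x := fun x hx => (hfd x hx).continuousAt
  have part1 : 1 / 2 ≤ k₂ → θs₂ ≤ θs₁ := fun hk =>
    key_lemma p₀ δ κ M k₁ k₂ μ fL θs₁ θs₂ hδ hκ hk₁ hk₂ hfpos hcont hfint hftot hmint
      hμpos hcond hθs₁ hθs₂ heq₁ heq₂ hk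
  have part2 : k₂ ≤ 1 / 2 → θs₁ ≤ θs₂ := by
    intro hk
    have hk₂' : (1 - k₂) ∈ Set.Ioo (0:ℝ) 1 := ⟨by linarith [hk₂.2], by linarith [hk₂.1]⟩
    have heq₁' : ∀ θ ∈ Theta μ M κ,
        J1 p₀ fL δ κ k₁ (1 - k₂) θ θs₁ ≤ J1 p₀ fL δ κ k₁ (1 - k₂) θs₂ θs₁ := by
      intro θ hθ
      rw [← J2_eq_J1_swap, ← J2_eq_J1_swap]
      exact heq₂ θ hθ
    have heq₂' : ∀ θ ∈ Theta μ M κ,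
        J2 p₀ fL δ κ k₁ (1 - k₂) θ θs₂ ≤ J2 p₀ fL δ κ k₁ (1 - k₂) θs₁ θs₂ := by
      intro θ hθ
      rw [← J1_eq_J2_swap, ← J1_eq_J2_swap]
      exact heq₁ θ hθ
    exact key_lemma p₀ δ κ M k₁ (1 - k₂) μ fL θs₂ θs₁ hδ hκ hk₁ hk₂' hfpos hcont hfint
      hftot hmint hμpos hcond hθs₂ hθs₁ heq₁' heq₂' (by linarith)
  exact ⟨part1, part2, fun hk => le_antisymm (part2 hk.le) (part1 hk.ge)⟩


end
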